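/- Let R₀ > e^{3/4} and define σ : [0,∞) → ℝ by σ(r) = log R₀ + r²/R₀² − r⁴/(4R₀⁴) − 3/4 for r < R₀, and σ(r) = log r for r ≥ R₀. Then the radial function x ↦ σ(|x|) on ℝ² is C¹, satisfies σ·Δσ ≥ 0 on ℝ² (with h ≡ 1), is nonconstant, and satisfies ∫_{B_{2R}\B_R} σ(|x|)² dx ≤ C·R²·(log R)² for all R ≥ 2 and some constant C. -/

import Mathlib

open Real MeasureTheory

/-- The partial derivative of `f` in the `i`-th coordinate direction. -/
noncomputable def pderiv' {n : ℕ} (f : EuclideanSpace ℝ (Fin n) → ℝ)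
    (i : Fin n) (x : EuclideanSpace ℝ (Fin n)) : ℝ :=
  fderiv ℝ f x (EuclideanSpace.single i (1 : ℝ))


noncomputable def gfun (R₀ s : ℝ) : ℝ :=
  if s < R₀ ^ 2 then Real.log R₀ + s / R₀ ^ 2 - s ^ 2 / (4 * R₀ ^ 4) - 3 / 4
  else Real.log s / 2

noncomputable def gfun₁ (R₀ s : ℝ) : ℝ :=
  if s < R₀ ^ 2 then 1 / R₀ ^ 2 - s / (2 * R₀ ^ 4) else 1 / (2 * s)

noncomputable def gfun₂ (R₀ s : ℝ) : ℝ :=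
  if s < R₀ ^ 2 then -(1 / (2 * R₀ ^ 4)) else -(1 / (2 * s ^ 2))

lemma hasDerivAt_p (R₀ s : ℝ) :
    HasDerivAt (fun s : ℝ => Real.log R₀ + s / R₀ ^ 2 - s ^ 2 / (4 * R₀ ^ 4) - 3 / 4)
      (1 / R₀ ^ 2 - s / (2 * R₀ ^ 4)) s := by
  have h1 : HasDerivAt (fun s : ℝ => Real.log R₀ + s / R₀ ^ 2 - s ^ 2 / (4 * R₀ ^ 4) - 3 / 4)
      (0 + 1 / R₀ ^ 2 - (↑2 * s ^ 1) / (4 * R₀ ^ 4) - 0) s :=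
    (((hasDerivAt_const s _).add ((hasDerivAt_id s).div_const _)).sub
      ((hasDerivAt_pow 2 s).div_const _)).sub (hasDerivAt_const s _)
  convert h1 using 1
  ring

lemma hasDerivAt_q (s : ℝ) (hs : s ≠ 0) :
    HasDerivAt (fun s : ℝ => Real.log s / 2) (1 / (2 * s)) s := by
  have h1 : HasDerivAt (fun s : ℝ => Real.log s / 2) (s⁻¹ / 2) s :=
    (Real.hasDerivAt_log hs).div_const 2
  convert h1 using 1
  field_simp

lemma hasDerivAt_q2 (s : ℝ) (hs : s ≠ 0) :
    HasDerivAt (fun s : ℝ => 1 / (2 * s)) (-(1 / (2 * s ^ 2))) s := by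
  have h1 : HasDerivAt (fun s : ℝ => 2 * s) 2 s := by
    simpa using (hasDerivAt_id s).const_mul 2
  have h2 : HasDerivAt (fun s : ℝ => 1 / (2 * s)) ((0 * (2 * s) - 1 * 2) / (2 * s) ^ 2) s :=
    (hasDerivAt_const s (1 : ℝ)).div h1 (by simpa using hs)
  convert h2 using 1
  field_simp
  ring

lemma gfun_eqOn_left (R₀ : ℝ) (h : 1 < R₀) :
    Set.EqOn (gfun R₀)
      (fun s => Real.log R₀ + s / R₀ ^ 2 - s ^ 2 / (4 * R₀ ^ 4) - 3 / 4)
      (Set.Iic (R₀ ^ 2)) := by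
  intro s hs
  rcases lt_or_eq_of_le (Set.mem_Iic.mp hs) with h' | h'
  · simp [gfun, h']
  · subst h'
    have hR : (0 : ℝ) < R₀ := by linarith
    simp only [gfun, if_neg (lt_irrefl _), Real.log_pow]
    push_cast
    field_simp
    ring

lemma gfun_eqOn_right (R₀ : ℝ) :
    Set.EqOn (gfun R₀) (fun s => Real.log s / 2) (Set.Ici (R₀ ^ 2)) := by
  intro s hs
  simp [gfun, not_lt.mpr (Set.mem_Ici.mp hs)]

lemma gfun₁_eqOn_left (R₀ : ℝ) (h : 1 < R₀) :
    Set.EqOn (gfun₁ R₀) (fun s => 1 / R₀ ^ 2 - s / (2 * R₀ ^ 4)) (Set.Iic (R₀ ^ 2)) := by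
  intro s hs
  rcases lt_or_eq_of_le (Set.mem_Iic.mp hs) with h' | h'
  · simp [gfun₁, h']
  · subst h'
    have hR : (0 : ℝ) < R₀ := by linarith
    simp only [gfun₁, if_neg (lt_irrefl _)]
    field_simp
    ring

lemma gfun₁_eqOn_right (R₀ : ℝ) :
    Set.EqOn (gfun₁ R₀) (fun s => 1 / (2 * s)) (Set.Ici (R₀ ^ 2)) := by
  intro s hs
  simp [gfun₁, not_lt.mpr (Set.mem_Ici.mp hs)]

lemma hasDerivAt_gfun (R₀ : ℝ) (h : 1 < R₀) (s : ℝ) :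
    HasDerivAt (gfun R₀) (gfun₁ R₀ s) s := by
  have hR : (0 : ℝ) < R₀ := by linarith
  have hR2 : (1 : ℝ) < R₀ ^ 2 := by nlinarith
  rcases lt_trichotomy s (R₀ ^ 2) with hlt | heq | hgt
  · have heq : gfun R₀ =ᶠ[nhds s]
        (fun s => Real.log R₀ + s / R₀ ^ 2 - s ^ 2 / (4 * R₀ ^ 4) - 3 / 4) := by
      filter_upwards [Iio_mem_nhds hlt] with t ht
      simp [gfun, Set.mem_Iio.mp ht]
    rw [show gfun₁ R₀ s = 1 / R₀ ^ 2 - s / (2 * R₀ ^ 4) from by simp [gfun₁, hlt]]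
    exact (hasDerivAt_p R₀ s).congr_of_eventuallyEq heq
  · subst heq
    have hne : (R₀ ^ 2 : ℝ) ≠ 0 := by positivity
    have hl : HasDerivWithinAt (gfun R₀) (1 / (2 * R₀ ^ 2)) (Set.Iic (R₀ ^ 2)) (R₀ ^ 2) := by
      have hp := (hasDerivAt_p R₀ (R₀ ^ 2)).hasDerivWithinAt (s := Set.Iic (R₀ ^ 2))
      have hv : (1 : ℝ) / R₀ ^ 2 - R₀ ^ 2 / (2 * R₀ ^ 4) = 1 / (2 * R₀ ^ 2) := by
        field_simp; ring
      rw [← hv]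
      exact hp.congr (gfun_eqOn_left R₀ h) (gfun_eqOn_left R₀ h Set.self_mem_Iic)
    have hr : HasDerivWithinAt (gfun R₀) (1 / (2 * R₀ ^ 2)) (Set.Ici (R₀ ^ 2)) (R₀ ^ 2) := by
      have hq := (hasDerivAt_q (R₀ ^ 2) hne).hasDerivWithinAt (s := Set.Ici (R₀ ^ 2))
      exact hq.congr (gfun_eqOn_right R₀) (gfun_eqOn_right R₀ Set.self_mem_Ici)
    have hu := hl.union hr
    rw [Set.Iic_union_Ici] at hu
    have h2 := hu.hasDerivAt (by simp)
    rwa [show (1 : ℝ) / (2 * R₀ ^ 2) = gfun₁ R₀ (R₀ ^ 2) from by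
      simp [gfun₁]] at h2
  · have hne : s ≠ 0 := by nlinarith
    have heq : gfun R₀ =ᶠ[nhds s] (fun s => Real.log s / 2) := by
      filter_upwards [Ioi_mem_nhds hgt] with t ht
      simp [gfun, not_lt.mpr (le_of_lt (Set.mem_Ioi.mp ht))]
    rw [show gfun₁ R₀ s = 1 / (2 * s) from by simp [gfun₁, not_lt.mpr hgt.le]]
    exact (hasDerivAt_q s hne).congr_of_eventuallyEq heq

lemma hasDerivAt_gfun₁ (R₀ : ℝ) (h : 1 < R₀) (s : ℝ) :
    HasDerivAt (gfun₁ R₀) (gfun₂ R₀ s) s := by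
  have hR : (0 : ℝ) < R₀ := by linarith
  have hR2 : (1 : ℝ) < R₀ ^ 2 := by nlinarith
  have hp : ∀ t : ℝ, HasDerivAt (fun s : ℝ => 1 / R₀ ^ 2 - s / (2 * R₀ ^ 4))
      (-(1 / (2 * R₀ ^ 4))) t := by
    intro t
    have h1 : HasDerivAt (fun s : ℝ => 1 / R₀ ^ 2 - s / (2 * R₀ ^ 4)) (0 - 1 / (2 * R₀ ^ 4)) t :=
      (hasDerivAt_const t (1 / R₀ ^ 2 : ℝ)).sub
      ((hasDerivAt_id t).div_const (2 * R₀ ^ 4))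
    convert h1 using 1
    ring
  rcases lt_trichotomy s (R₀ ^ 2) with hlt | heq | hgt
  · have heq : gfun₁ R₀ =ᶠ[nhds s] (fun s => 1 / R₀ ^ 2 - s / (2 * R₀ ^ 4)) := by
      filter_upwards [Iio_mem_nhds hlt] with t ht
      simp [gfun₁, Set.mem_Iio.mp ht]
    rw [show gfun₂ R₀ s = -(1 / (2 * R₀ ^ 4)) from by simp [gfun₂, hlt]]
    exact (hp s).congr_of_eventuallyEq heq
  · subst heq
    have hne : (R₀ ^ 2 : ℝ) ≠ 0 := by positivity
    have hval : -(1 / (2 * (R₀ ^ 2) ^ 2) : ℝ) = -(1 / (2 * R₀ ^ 4)) := by ring_nf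
    have hl : HasDerivWithinAt (gfun₁ R₀) (-(1 / (2 * (R₀ ^ 2) ^ 2)))
        (Set.Iic (R₀ ^ 2)) (R₀ ^ 2) := by
      rw [hval]
      exact ((hp (R₀ ^ 2)).hasDerivWithinAt).congr (gfun₁_eqOn_left R₀ h)
        (gfun₁_eqOn_left R₀ h Set.self_mem_Iic)
    have hr : HasDerivWithinAt (gfun₁ R₀) (-(1 / (2 * (R₀ ^ 2) ^ 2)))
        (Set.Ici (R₀ ^ 2)) (R₀ ^ 2) :=
      ((hasDerivAt_q2 (R₀ ^ 2) hne).hasDerivWithinAt).congr (gfun₁_eqOn_right R₀)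
        (gfun₁_eqOn_right R₀ Set.self_mem_Ici)
    have hu := hl.union hr
    rw [Set.Iic_union_Ici] at hu
    have h2 := hu.hasDerivAt (by simp)
    rwa [show -(1 / (2 * (R₀ ^ 2) ^ 2) : ℝ) = gfun₂ R₀ (R₀ ^ 2) from by
      simp [gfun₂]] at h2
  · have hne : s ≠ 0 := by nlinarith
    have heq : gfun₁ R₀ =ᶠ[nhds s] (fun s => 1 / (2 * s)) := by
      filter_upwards [Ioi_mem_nhds hgt] with t ht
      simp [gfun₁, not_lt.mpr (le_of_lt (Set.mem_Ioi.mp ht))]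
    rw [show gfun₂ R₀ s = -(1 / (2 * s ^ 2)) from by simp [gfun₂, not_lt.mpr hgt.le]]
    exact (hasDerivAt_q2 s hne).congr_of_eventuallyEq heq

set_option maxHeartbeats 1000000 in
/-- Moschini's example: for `R₀ > e^{3/4}`, the radial function
`σ(r) = log R₀ + r²/R₀² − r⁴/(4R₀⁴) − 3/4` for `r < R₀`, `σ(r) = log r` for
`r ≥ R₀`, viewed on `ℝ²`, is `C¹`, satisfies `σ Δσ ≥ 0`, is nonconstant, and
`∫_{B_{2R}∖B_R} σ² ≤ C R² (log R)²` for all `R ≥ 2`. -/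
theorem moschini_example (R₀ : ℝ) (hR₀ : Real.exp (3 / 4) < R₀) :
    let F : EuclideanSpace ℝ (Fin 2) → ℝ := fun x =>
      if ‖x‖ < R₀ then
        Real.log R₀ + ‖x‖ ^ 2 / R₀ ^ 2 - ‖x‖ ^ 4 / (4 * R₀ ^ 4) - 3 / 4
      else Real.log ‖x‖
    ContDiff ℝ 1 F ∧
    (∀ x, 0 ≤ F x * ∑ i : Fin 2, pderiv' (pderiv' F i) i x) ∧
    (∃ x y, F x ≠ F y) ∧
    (∃ C : ℝ, ∀ R : ℝ, 2 ≤ R →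
      (∫ x in Metric.ball (0 : EuclideanSpace ℝ (Fin 2)) (2 * R) \
          Metric.ball (0 : EuclideanSpace ℝ (Fin 2)) R, (F x) ^ 2)
        ≤ C * R ^ 2 * (Real.log R) ^ 2) := by
  intro F
  have h1 : (1 : ℝ) < R₀ := by
    have h := Real.add_one_le_exp (3 / 4 : ℝ)
    linarith
  have hR : (0 : ℝ) < R₀ := by linarith
  have hlog : 3 / 4 < Real.log R₀ := (Real.lt_log_iff_exp_lt hR).mpr hR₀
  have hR2 : (1 : ℝ) < R₀ ^ 2 := by nlinarith
  have hFg : ∀ x : EuclideanSpace ℝ (Fin 2), F x = gfun R₀ (‖x‖ ^ 2) := by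
    intro x
    show (if ‖x‖ < R₀ then
        Real.log R₀ + ‖x‖ ^ 2 / R₀ ^ 2 - ‖x‖ ^ 4 / (4 * R₀ ^ 4) - 3 / 4
      else Real.log ‖x‖) = gfun R₀ (‖x‖ ^ 2)
    by_cases hx : ‖x‖ < R₀
    · rw [if_pos hx, gfun, if_pos (by nlinarith [norm_nonneg x])]
      ring
    · push_neg at hx
      have hxpos : 0 < ‖x‖ := lt_of_lt_of_le hR hx
      rw [if_neg (not_lt.mpr hx), gfun, if_neg (not_lt.mpr (by nlinarith)), Real.log_pow]
      push_cast
      ring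
  have hnsq : ∀ x : EuclideanSpace ℝ (Fin 2),
      HasFDerivAt (fun y : EuclideanSpace ℝ (Fin 2) => ‖y‖ ^ 2) (2 • (innerSL ℝ x)) x :=
    fun x => (hasStrictFDerivAt_norm_sq x).hasFDerivAt
  have hFd : ∀ x, HasFDerivAt F ((gfun₁ R₀ (‖x‖ ^ 2)) • (2 • (innerSL ℝ x))) x := by
    intro x
    have h2 := (hasDerivAt_gfun R₀ h1 (‖x‖ ^ 2)).comp_hasFDerivAt x (hnsq x)
    exact h2.congr_of_eventuallyEq (Filter.Eventually.of_forall fun y => hFg y)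
  have hpd : ∀ (i : Fin 2) (x : EuclideanSpace ℝ (Fin 2)),
      pderiv' F i x = gfun₁ R₀ (‖x‖ ^ 2) * (2 * x i) := by
    intro i x
    rw [pderiv', (hFd x).fderiv]
    fin_cases i <;>
      · simp [EuclideanSpace.inner_single_right, smul_eq_mul]
  have hGd : ∀ (i : Fin 2) (x : EuclideanSpace ℝ (Fin 2)),
      HasFDerivAt (fun y : EuclideanSpace ℝ (Fin 2) => gfun₁ R₀ (‖y‖ ^ 2) * (2 * y i))
        ((gfun₁ R₀ (‖x‖ ^ 2)) • ((2 : ℝ) • (innerSL ℝ (EuclideanSpace.single i (1 : ℝ)))) +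
          (2 * x i) • ((gfun₂ R₀ (‖x‖ ^ 2)) • (2 • (innerSL ℝ x)))) x := by
    intro i x
    have hc : HasFDerivAt (fun y : EuclideanSpace ℝ (Fin 2) => gfun₁ R₀ (‖y‖ ^ 2))
        ((gfun₂ R₀ (‖x‖ ^ 2)) • (2 • (innerSL ℝ x))) x :=
      by have := (hasDerivAt_gfun₁ R₀ h1 (‖x‖ ^ 2)).comp_hasFDerivAt x (hnsq x); exact this
    have hd0 := (innerSL ℝ (EuclideanSpace.single i (1 : ℝ))).hasFDerivAt (x := x)
    have hd : HasFDerivAt (fun y : EuclideanSpace ℝ (Fin 2) => 2 * y i)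
        ((2 : ℝ) • (innerSL ℝ (EuclideanSpace.single i (1 : ℝ)))) x := by
      have h3 := hd0.const_mul (2 : ℝ)
      refine h3.congr_of_eventuallyEq (Filter.Eventually.of_forall fun y => ?_)
      simp [EuclideanSpace.inner_single_left]
    exact hc.mul hd
  have hpd2 : ∀ (i : Fin 2) (x : EuclideanSpace ℝ (Fin 2)),
      pderiv' (pderiv' F i) i x =
        2 * gfun₁ R₀ (‖x‖ ^ 2) + 4 * gfun₂ R₀ (‖x‖ ^ 2) * (x i) ^ 2 := by
    intro i x
    have hfe : pderiv' F i = fun y => gfun₁ R₀ (‖y‖ ^ 2) * (2 * y i) := funext (hpd i)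
    rw [pderiv', hfe, (hGd i x).fderiv]
    fin_cases i <;>
      · simp [EuclideanSpace.inner_single_right, EuclideanSpace.inner_single_left,
          EuclideanSpace.single_apply, smul_eq_mul]
        ring
  have hsum : ∀ x : EuclideanSpace ℝ (Fin 2), (x 0) ^ 2 + (x 1) ^ 2 = ‖x‖ ^ 2 := by
    intro x
    rw [← real_inner_self_eq_norm_sq]
    simp only [PiLp.inner_apply, RCLike.inner_apply, Fin.sum_univ_two, conj_trivial]
    ring
  have hlap : ∀ x : EuclideanSpace ℝ (Fin 2),
      ∑ i : Fin 2, pderiv' (pderiv' F i) i x =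
        4 * gfun₁ R₀ (‖x‖ ^ 2) + 4 * (‖x‖ ^ 2) * gfun₂ R₀ (‖x‖ ^ 2) := by
    intro x
    rw [Fin.sum_univ_two, hpd2, hpd2, ← hsum x]
    ring
  have hg_nonneg : ∀ s : ℝ, 0 ≤ s → 0 ≤ gfun R₀ s := by
    intro s hs
    rw [gfun]
    split_ifs with hlt
    · have hd2 : 0 ≤ s / R₀ ^ 2 := by positivity
      have hd3 : s ^ 2 / (4 * R₀ ^ 4) ≤ s / R₀ ^ 2 := by
        rw [div_le_div_iff₀ (by positivity) (by positivity)]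
        nlinarith [mul_le_mul_of_nonneg_left hlt.le hs, sq_nonneg R₀, hs]
      linarith
    · push_neg at hlt
      have hgt1 : (1 : ℝ) < s := lt_of_lt_of_le hR2 hlt
      have := Real.log_pos hgt1
      linarith
  have hlap_nonneg : ∀ s : ℝ, 0 ≤ s → 0 ≤ 4 * gfun₁ R₀ s + 4 * s * gfun₂ R₀ s := by
    intro s hs
    rw [gfun₁, gfun₂]
    split_ifs with hlt
    · rw [show 4 * (1 / R₀ ^ 2 - s / (2 * R₀ ^ 4)) + 4 * s * -(1 / (2 * R₀ ^ 4))
          = 4 * (R₀ ^ 2 - s) / R₀ ^ 4 from by field_simp; ring]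
      apply div_nonneg _ (by positivity)
      nlinarith
    · push_neg at hlt
      have hs0 : s ≠ 0 := by nlinarith
      rw [show 4 * (1 / (2 * s)) + 4 * s * -(1 / (2 * s ^ 2)) = 0 from by
        field_simp
        ring]
  refine ⟨?_, ?_, ?_, ?_⟩
  · have hgdiff : Differentiable ℝ (gfun R₀) := fun s =>
      (hasDerivAt_gfun R₀ h1 s).differentiableAt
    have hderiv : deriv (gfun R₀) = gfun₁ R₀ :=
      funext fun s => (hasDerivAt_gfun R₀ h1 s).deriv
    have hg1diff : Differentiable ℝ (gfun₁ R₀) := fun s =>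
      (hasDerivAt_gfun₁ R₀ h1 s).differentiableAt
    have hgC1 : ContDiff ℝ 1 (gfun R₀) :=
      contDiff_one_iff_deriv.mpr ⟨hgdiff, hderiv ▸ hg1diff.continuous⟩
    have hcd : ContDiff ℝ 1 (fun x : EuclideanSpace ℝ (Fin 2) => gfun R₀ (‖x‖ ^ 2)) :=
      hgC1.comp (contDiff_norm_sq ℝ)
    rwa [show F = (fun x : EuclideanSpace ℝ (Fin 2) => gfun R₀ (‖x‖ ^ 2)) from funext hFg]
  · intro x
    rw [hlap x, hFg x]
    exact mul_nonneg (hg_nonneg _ (by positivity)) (hlap_nonneg _ (by positivity))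
  · refine ⟨0, EuclideanSpace.single 0 R₀, ?_⟩
    rw [hFg, hFg]
    have h0 : ‖(0 : EuclideanSpace ℝ (Fin 2))‖ = 0 := norm_zero
    have hs : ‖EuclideanSpace.single (0 : Fin 2) R₀‖ = R₀ := by
      rw [EuclideanSpace.norm_single]
      exact abs_of_pos hR
    rw [h0, hs]
    have e1 : gfun R₀ ((0 : ℝ) ^ 2) = Real.log R₀ - 3 / 4 := by
      rw [gfun, if_pos (by nlinarith)]
      norm_num
    have e2 : gfun R₀ (R₀ ^ 2) = Real.log R₀ := by
      rw [gfun, if_neg (lt_irrefl _), Real.log_pow]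
      push_cast
      ring
    rw [e1, e2]
    intro hEq
    linarith
  · set A : ℝ := Real.log R₀ + 1 + Real.log 2 with hAdef
    have hlog2 : 0 < Real.log 2 := Real.log_pos one_lt_two
    have hApos : 0 < A := by simp only [hAdef]; linarith
    set K : ℝ := (A / Real.log 2 + 1) ^ 2 with hKdef
    refine ⟨4 * Real.pi * K, ?_⟩
    intro R hRge
    have hRpos : (0 : ℝ) < R := by linarith
    have hlogR : Real.log 2 ≤ Real.log R := Real.log_le_log (by norm_num) hRge
    have hlogRpos : 0 < Real.log R := lt_of_lt_of_le hlog2 hlogR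
    set S := Metric.ball (0 : EuclideanSpace ℝ (Fin 2)) (2 * R) \
      Metric.ball (0 : EuclideanSpace ℝ (Fin 2)) R with hSdef
    have hSm : MeasurableSet S := measurableSet_ball.diff measurableSet_ball
    have hSfin : volume S < ⊤ :=
      lt_of_le_of_lt (measure_mono Set.diff_subset) measure_ball_lt_top
    have hbound : ∀ x ∈ S, ‖(F x) ^ 2‖ ≤ K * Real.log R ^ 2 := by
      intro x hx
      have hxball : ‖x‖ < 2 * R := by
        have h' := hx.1
        rwa [Metric.mem_ball, dist_zero_right] at h'
      have habs : |F x| ≤ A + Real.log R := by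
        rw [hFg x, gfun]
        split_ifs with hlt
        · have hd1 : ‖x‖ ^ 2 / R₀ ^ 2 ≤ 1 := by
            rw [div_le_one (by positivity)]; linarith
          have hd2 : (0 : ℝ) ≤ ‖x‖ ^ 2 / R₀ ^ 2 := by positivity
          have hd3 : (‖x‖ ^ 2) ^ 2 / (4 * R₀ ^ 4) ≤ 1 := by
            rw [div_le_one (by positivity)]
            nlinarith [norm_nonneg x]
          have hd4 : (0 : ℝ) ≤ (‖x‖ ^ 2) ^ 2 / (4 * R₀ ^ 4) := by positivity
          rw [abs_le]
          constructor
          · simp only [hAdef]; linarith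
          · simp only [hAdef]; linarith
        · push_neg at hlt
          have hx1 : (1 : ℝ) < ‖x‖ ^ 2 := lt_of_lt_of_le hR2 hlt
          have hlpos : 0 < Real.log (‖x‖ ^ 2) := Real.log_pos hx1
          have hub : Real.log (‖x‖ ^ 2) ≤ Real.log 4 + 2 * Real.log R := by
            have h4 : ‖x‖ ^ 2 ≤ 4 * R ^ 2 := by nlinarith [norm_nonneg x]
            calc Real.log (‖x‖ ^ 2) ≤ Real.log (4 * R ^ 2) :=
                  Real.log_le_log (by linarith) h4
              _ = Real.log 4 + Real.log (R ^ 2) :=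
                  Real.log_mul (by norm_num) (by positivity)
              _ = Real.log 4 + 2 * Real.log R := by
                  rw [Real.log_pow]; push_cast; ring
          have h4' : Real.log 4 = 2 * Real.log 2 := by
            rw [show (4 : ℝ) = 2 ^ 2 by norm_num, Real.log_pow]; push_cast; ring
          rw [abs_le]
          constructor
          · simp only [hAdef]; linarith
          · simp only [hAdef]; linarith
      calc ‖(F x) ^ 2‖ = |F x| ^ 2 := by rw [Real.norm_eq_abs, abs_pow]
        _ ≤ (A + Real.log R) ^ 2 := pow_le_pow_left₀ (abs_nonneg _) habs 2
        _ ≤ K * Real.log R ^ 2 := by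
            have hstep : A + Real.log R ≤ (A / Real.log 2 + 1) * Real.log R := by
              have hAeq : A = (A / Real.log 2) * Real.log 2 := by field_simp
              nlinarith [div_nonneg hApos.le hlog2.le]
            calc (A + Real.log R) ^ 2 ≤ ((A / Real.log 2 + 1) * Real.log R) ^ 2 :=
                pow_le_pow_left₀ (by positivity) hstep 2
              _ = K * Real.log R ^ 2 := by rw [mul_pow]
    have hineq := norm_setIntegral_le_of_norm_le_const hSfin hbound
    have hle : (∫ x in S, (F x) ^ 2) ≤ K * Real.log R ^ 2 * (volume S).toReal :=
      le_trans (le_abs_self _) (by rwa [Real.norm_eq_abs] at hineq)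
    have hvol : (volume S).toReal ≤ 4 * R ^ 2 * Real.pi := by
      have hb2 : volume (Metric.ball (0 : EuclideanSpace ℝ (Fin 2)) (2 * R)) =
          ENNReal.ofReal (2 * R) ^ 2 * ENNReal.ofReal Real.pi := by
        rw [EuclideanSpace.volume_ball]
        rw [Fintype.card_fin]
        norm_num [Real.sq_sqrt Real.pi_pos.le, Real.Gamma_two]
      have hmono := ENNReal.toReal_mono
        (a := volume S)
        (b := volume (Metric.ball (0 : EuclideanSpace ℝ (Fin 2)) (2 * R)))
        measure_ball_lt_top.ne (measure_mono Set.diff_subset)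
      calc (volume S).toReal
          ≤ (volume (Metric.ball (0 : EuclideanSpace ℝ (Fin 2)) (2 * R))).toReal := hmono
        _ = 4 * R ^ 2 * Real.pi := by
            rw [hb2, ENNReal.toReal_mul, ENNReal.toReal_pow,
              ENNReal.toReal_ofReal (by positivity), ENNReal.toReal_ofReal Real.pi_pos.le]
            ring
    calc (∫ x in S, (F x) ^ 2) ≤ K * Real.log R ^ 2 * (volume S).toReal := hle
      _ ≤ K * Real.log R ^ 2 * (4 * R ^ 2 * Real.pi) := by
          apply mul_le_mul_of_nonneg_left hvol (by positivity)
      _ = 4 * Real.pi * K * R ^ 2 * Real.log R ^ 2 := by ring
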